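/- Let F be an n×n sub-stochastic matrix with all diagonal entries equal to zero. If exactly one row sum of F equals 1, then ρ(F) ≤ √α₁ < 1, where α₁ = max{Λ_s[F] : Λ_s[F] < 1}. -/

import Mathlib

/-- The spectral radius of a real square matrix. -/
noncomputable def specRad {n : ℕ} (M : Matrix (Fin n) (Fin n) ℝ) : ℝ :=
  ⨆ μ : spectrum ℂ (M.map (algebraMap ℝ ℂ)), ‖(μ : ℂ)‖

/-- Theorem 2.3: Let `F` be an `n × n` (`n ≥ 2`) sub-stochastic matrix with all
diagonal entries equal to zero.  If exactly one row sum of `F` equals `1`, then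
`ρ(F) ≤ √α₁ < 1`, where `α₁` is the largest row sum that is `< 1`. -/
theorem specRad_le_sqrt {n : ℕ} (hn : 2 ≤ n) (F : Matrix (Fin n) (Fin n) ℝ)
    (hnn : ∀ i j, 0 ≤ F i j) (hrow : ∀ i, ∑ j, F i j ≤ 1)
    (hdiag : ∀ i, F i i = 0)
    (huniq : ∃! s, (∑ j, F s j) = 1)
    (α₁ : ℝ) (hα₁ : IsGreatest {x | ∃ s, (∑ j, F s j) = x ∧ x < 1} α₁) :
    specRad F ≤ Real.sqrt α₁ ∧ Real.sqrt α₁ < 1 := by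
  obtain ⟨s, hs, hsu⟩ := huniq
  obtain ⟨⟨t, ht, htlt⟩, hub⟩ := hα₁
  have hα₀ : 0 ≤ α₁ := ht ▸ Finset.sum_nonneg fun j _ => hnn t j
  have hle : ∀ k, k ≠ s → ∑ j, F k j ≤ α₁ := fun k hk =>
    hub ⟨k, rfl, lt_of_le_of_ne (hrow k) (fun h => hk (hsu k h))⟩
  -- every row sum of F*F is ≤ α₁
  have hF2 : ∀ i, ∑ j, (F * F) i j ≤ α₁ := by
    intro i
    have hswap : ∑ j, (F * F) i j = ∑ k, F i k * ∑ j, F k j := by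
      simp only [Matrix.mul_apply]
      rw [Finset.sum_comm]
      simp [Finset.mul_sum]
    rw [hswap]
    by_cases hi : i = s
    · rw [hi]
      calc ∑ k, F s k * ∑ j, F k j ≤ ∑ k, F s k * α₁ := by
            apply Finset.sum_le_sum
            intro k _
            by_cases hk : k = s
            · rw [hk, hdiag s]; simp
            · exact mul_le_mul_of_nonneg_left (hle k hk) (hnn s k)
        _ = α₁ := by rw [← Finset.sum_mul, hs, one_mul]
    · calc ∑ k, F i k * ∑ j, F k j ≤ ∑ k, F i k * 1 :=
            Finset.sum_le_sum fun k _ =>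
              mul_le_mul_of_nonneg_left (hrow k) (hnn i k)
        _ = ∑ k, F i k := by simp
        _ ≤ α₁ := hle i hi
  have hprod : ∀ i j, 0 ≤ (F * F) i j := fun i j => by
    rw [Matrix.mul_apply]
    exact Finset.sum_nonneg fun k _ => mul_nonneg (hnn i k) (hnn k j)
  -- every element of the spectrum has |μ| ≤ √α₁
  set M := F.map (algebraMap ℝ ℂ) with hM
  have key : ∀ μ : ℂ, μ ∈ spectrum ℂ M → ‖μ‖ ≤ Real.sqrt α₁ := by
    intro μ hμ
    rw [spectrum.mem_iff] at hμ
    have hdet : (algebraMap ℂ (Matrix (Fin n) (Fin n) ℂ) μ - M).det = 0 := by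
      by_contra h
      exact hμ ((Matrix.isUnit_iff_isUnit_det _).2 (isUnit_iff_ne_zero.2 h))
    obtain ⟨v, hv0, hv⟩ := (Matrix.exists_mulVec_eq_zero_iff).2 hdet
    have hMv : M.mulVec v = μ • v := by
      rw [Matrix.sub_mulVec] at hv
      have h1 : (algebraMap ℂ (Matrix (Fin n) (Fin n) ℂ) μ).mulVec v = μ • v := by
        rw [Algebra.algebraMap_eq_smul_one, Matrix.smul_mulVec,
          Matrix.one_mulVec]
      rw [h1] at hv
      exact (sub_eq_zero.mp hv).symm
    have hM2v : (M * M).mulVec v = (μ * μ) • v := by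
      rw [← Matrix.mulVec_mulVec, hMv, Matrix.mulVec_smul, hMv, smul_smul]
    -- pick an index maximizing |v i|
    have hne : (Finset.univ : Finset (Fin n)).Nonempty :=
      ⟨⟨0, by omega⟩, Finset.mem_univ _⟩
    obtain ⟨i, -, hi⟩ := Finset.exists_max_image Finset.univ
      (fun j => ‖v j‖) hne
    have hvi : 0 < ‖v i‖ := by
      obtain ⟨j, hj⟩ := Function.ne_iff.mp hv0
      exact lt_of_lt_of_le (by simpa using hj) (hi j (Finset.mem_univ j))
    -- the main estimate
    have hMF2 : M * M = (F * F).map (algebraMap ℝ ℂ) := by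
      rw [hM, Matrix.map_mul]
    have hest : ‖μ‖ ^ 2 * ‖v i‖ ≤ α₁ * ‖v i‖ := by
      have h1 : (μ * μ) * v i = ∑ j, ((F * F) i j : ℂ) * v j := by
        have h2 := congrFun hM2v i
        rw [hMF2] at h2
        simp only [Matrix.mulVec, dotProduct, Matrix.map_apply,
          Pi.smul_apply, smul_eq_mul, Complex.coe_algebraMap] at h2
        rw [← h2]
      calc ‖μ‖ ^ 2 * ‖v i‖
          = ‖(μ * μ) * v i‖ := by
            rw [norm_mul, norm_mul, sq]
        _ = ‖∑ j, ((F * F) i j : ℂ) * v j‖ := by rw [h1]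
        _ ≤ ∑ j, ‖((F * F) i j : ℂ) * v j‖ :=
            norm_sum_le _ _
        _ = ∑ j, (F * F) i j * ‖v j‖ := by
            apply Finset.sum_congr rfl
            intro j _
            rw [norm_mul, Complex.norm_real, Real.norm_of_nonneg (hprod i j)]
        _ ≤ ∑ j, (F * F) i j * ‖v i‖ := by
            apply Finset.sum_le_sum
            intro j _
            exact mul_le_mul_of_nonneg_left (hi j (Finset.mem_univ j)) (hprod i j)
        _ = (∑ j, (F * F) i j) * ‖v i‖ := by rw [← Finset.sum_mul]
        _ ≤ α₁ * ‖v i‖ :=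
            mul_le_mul_of_nonneg_right (hF2 i) hvi.le
    have hsq : ‖μ‖ ^ 2 ≤ α₁ := le_of_mul_le_mul_right hest hvi
    calc ‖μ‖ = Real.sqrt (‖μ‖ ^ 2) := by
          rw [Real.sqrt_sq (norm_nonneg μ)]
      _ ≤ Real.sqrt α₁ := Real.sqrt_le_sqrt hsq
  constructor
  · exact Real.iSup_le (fun ⟨μ, hμ⟩ => key μ hμ) (Real.sqrt_nonneg α₁)
  · calc Real.sqrt α₁ < Real.sqrt 1 := Real.sqrt_lt_sqrt hα₀ htlt
      _ = 1 := Real.sqrt_one
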